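/- A simplicial toric monoid σ with extremals v₁,…,v_n admits a canonical smooth refinement: the collection of all monoids ℤ≥0⟨v_i : i ∈ I⟩ for subsets I ⊆ {1,…,n} is a smooth refinement of σ (the 'smoothing' of σ). -/

import Mathlib

open scoped NNReal

namespace Toric

/-- The lattice `ℤ^n`. -/
abbrev L (n : ℕ) := Fin n → ℤ

/-- Inclusion of the lattice into the real vector space. -/
def toReal {n : ℕ} (v : L n) : Fin n → ℝ := fun i => (v i : ℝ)

lemma toReal_zero {n : ℕ} : toReal (0 : L n) = 0 := by
  funext i; simp [toReal]

lemma toReal_add {n : ℕ} (v w : L n) : toReal (v + w) = toReal v + toReal w := by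
  funext i; simp [toReal]

/-- The support of a monoid of lattice points: its non-negative real span,
viewed as a convex cone (an `ℝ≥0`-submodule). -/
noncomputable def supp {n : ℕ} (σ : AddSubmonoid (L n)) : Submodule ℝ≥0 (Fin n → ℝ) :=
  Submodule.span ℝ≥0 (toReal '' (σ : Set (L n)))

/-- A toric monoid: a finitely generated, sharp, saturated submonoid of the
lattice `ℤ^n` (integrality and torsion-freeness are automatic for submonoids
of a lattice). -/
structure IsToric {n : ℕ} (σ : AddSubmonoid (L n)) : Prop where
  fg : σ.FG
  sharp : ∀ v ∈ σ, -v ∈ σ → v = 0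
  saturated : ∀ v ∈ AddSubgroup.closure (σ : Set (L n)), ∀ k : ℕ, 0 < k → k • v ∈ σ → v ∈ σ

/-- `τ` is a face of `σ`: a submonoid such that `v + w ∈ τ` with `v, w ∈ σ`
implies `v, w ∈ τ`. -/
def IsFace {n : ℕ} (τ σ : AddSubmonoid (L n)) : Prop :=
  τ ≤ σ ∧ ∀ v w : L n, v ∈ σ → w ∈ σ → v + w ∈ τ → v ∈ τ ∧ w ∈ τ

/-- A refinement of the monoid `σ`: a collection of submonoids of `σ`, closed
under passing to faces, such that the intersection of any two members is a
face of both, and whose supports cover the support of `σ`. -/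
def IsRefinement {n : ℕ} (R : Set (AddSubmonoid (L n))) (σ : AddSubmonoid (L n)) : Prop :=
  (∀ σ' ∈ R, σ' ≤ σ) ∧
  (∀ σ' ∈ R, ∀ τ, IsFace τ σ' → τ ∈ R) ∧
  (∀ σ₁ ∈ R, ∀ σ₂ ∈ R, IsFace (σ₁ ⊓ σ₂) σ₁ ∧ IsFace (σ₁ ⊓ σ₂) σ₂) ∧
  (⋃ σ' ∈ R, (supp σ' : Set (Fin n → ℝ))) = (supp σ : Set (Fin n → ℝ))

/-- A smooth (toric) monoid: freely generated by finitely many linearly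
independent lattice vectors. -/
def IsSmooth {n : ℕ} (σ : AddSubmonoid (L n)) : Prop :=
  ∃ (k : ℕ) (b : Fin k → L n), LinearIndependent ℤ b ∧
    σ = AddSubmonoid.closure (Set.range b)

end Toric

namespace Toric


namespace SmoothingAux

variable {n k : ℕ} {b : Fin k → L n}

open Classical in
lemma mem_closure_image_iff (I : Set (Fin k)) (v : L n) :
    v ∈ AddSubmonoid.closure (b '' I) ↔
      ∃ c : Fin k → ℕ, (∀ i, c i ≠ 0 → i ∈ I) ∧ v = ∑ i, c i • b i := by
  constructor
  · intro hv
    induction hv using AddSubmonoid.closure_induction with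
    | mem x hx =>
        obtain ⟨i, hi, rfl⟩ := hx
        refine ⟨Pi.single i 1, ?_, ?_⟩
        · intro j hj
          by_cases h : j = i
          · subst h; exact hi
          · simp [Pi.single_apply, h] at hj
        · rw [Fintype.sum_eq_single i]
          · simp
          · intro j hj; simp [Pi.single_apply, hj]
    | zero => exact ⟨0, by simp, by simp⟩
    | add x y hx hy ihx ihy =>
        obtain ⟨c, hc, rfl⟩ := ihx
        obtain ⟨d, hd, rfl⟩ := ihy
        refine ⟨c + d, ?_, ?_⟩
        · intro i hi
          have h : c i ≠ 0 ∨ d i ≠ 0 := by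
            by_contra h
            push_neg at h
            exact hi (by simp [Pi.add_apply, h.1, h.2])
          rcases h with h | h
          · exact hc i h
          · exact hd i h
        · rw [← Finset.sum_add_distrib]
          refine Finset.sum_congr rfl fun i _ => ?_
          simp [add_smul, add_nsmul]
  · rintro ⟨c, hc, rfl⟩
    refine AddSubmonoid.sum_mem _ fun i _ => ?_
    by_cases h : c i = 0
    · rw [h, zero_nsmul]; exact zero_mem _
    · exact nsmul_mem
        (AddSubmonoid.subset_closure (Set.mem_image_of_mem b (hc i h))) _

lemma coeff_unique (hind : LinearIndependent ℤ b) {c d : Fin k → ℕ}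
    (h : ∑ i, c i • b i = ∑ i, d i • b i) : c = d := by
  have h' : ∑ i, ((c i : ℤ) - (d i : ℤ)) • b i = 0 := by
    rw [Finset.sum_congr rfl (fun i _ => sub_smul ((c i : ℤ)) _ _),
      Finset.sum_sub_distrib]
    simp only [natCast_zsmul]
    rw [h, sub_self]
  have := Fintype.linearIndependent_iff.mp hind _ h'
  funext i
  have hi := this i
  omega

lemma sum_single (b : Fin k → L n) (i : Fin k) :
    ∑ j, (Pi.single i 1 : Fin k → ℕ) j • b j = b i := by
  rw [Fintype.sum_eq_single i]
  · simp
  · intro j hj; simp [Pi.single_apply, hj]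

lemma sum_add_coeff (b : Fin k → L n) (c d : Fin k → ℕ) :
    ∑ i, (c + d) i • b i = ∑ i, c i • b i + ∑ i, d i • b i := by
  rw [← Finset.sum_add_distrib]
  exact Finset.sum_congr rfl fun i _ => by rw [Pi.add_apply, add_nsmul]

lemma face_of_subset (hind : LinearIndependent ℤ b) {I J : Set (Fin k)} (hJI : J ⊆ I) :
    IsFace (AddSubmonoid.closure (b '' J)) (AddSubmonoid.closure (b '' I)) := by
  refine ⟨AddSubmonoid.closure_mono (Set.image_mono hJI), ?_⟩
  intro v w hv hw hvw
  obtain ⟨c, hc, rfl⟩ := (mem_closure_image_iff I v).mp hv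
  obtain ⟨d, hd, rfl⟩ := (mem_closure_image_iff I w).mp hw
  obtain ⟨e, he, hsum⟩ := (mem_closure_image_iff J _).mp hvw
  have hcd : c + d = e := coeff_unique hind (by rw [sum_add_coeff, ← hsum])
  constructor
  · exact (mem_closure_image_iff J _).mpr ⟨c, fun i hi => he i (by
      rw [← hcd]; simp only [Pi.add_apply]; omega), rfl⟩
  · exact (mem_closure_image_iff J _).mpr ⟨d, fun i hi => he i (by
      rw [← hcd]; simp only [Pi.add_apply]; omega), rfl⟩

lemma inter_eq (hind : LinearIndependent ℤ b) (I₁ I₂ : Set (Fin k)) :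
    AddSubmonoid.closure (b '' I₁) ⊓ AddSubmonoid.closure (b '' I₂) =
      AddSubmonoid.closure (b '' (I₁ ∩ I₂)) := by
  apply le_antisymm
  · rintro v ⟨hv₁, hv₂⟩
    obtain ⟨c, hc, rfl⟩ := (mem_closure_image_iff I₁ v).mp hv₁
    obtain ⟨d, hd, hsum⟩ := (mem_closure_image_iff I₂ _).mp hv₂
    have hcd : c = d := coeff_unique hind hsum
    exact (mem_closure_image_iff _ _).mpr
      ⟨c, fun i hi => ⟨hc i hi, hd i (hcd ▸ hi)⟩, rfl⟩
  · exact le_inf (AddSubmonoid.closure_mono (Set.image_mono Set.inter_subset_left))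
      (AddSubmonoid.closure_mono (Set.image_mono Set.inter_subset_right))

lemma gen_mem_of_mem_face {τ : AddSubmonoid (L n)} {I : Set (Fin k)}
    (hτ : IsFace τ (AddSubmonoid.closure (b '' I))) {c : Fin k → ℕ}
    (hc : ∀ i, c i ≠ 0 → i ∈ I) (hv : ∑ i, c i • b i ∈ τ) {i : Fin k}
    (hi : c i ≠ 0) : b i ∈ τ := by
  have hdecomp : c = (c - Pi.single i 1) + Pi.single i 1 := by
    funext j
    by_cases h : j = i
    · subst h
      simp only [Pi.sub_apply, Pi.add_apply, Pi.single_eq_same]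
      omega
    · simp [Pi.single_apply, h]
  have hsum : ∑ j, c j • b j = ∑ j, (c - Pi.single i 1 : Fin k → ℕ) j • b j + b i := by
    conv_lhs => rw [hdecomp]
    rw [sum_add_coeff, sum_single]
  have hrest : ∑ j, (c - Pi.single i 1 : Fin k → ℕ) j • b j ∈ AddSubmonoid.closure (b '' I) := by
    refine (mem_closure_image_iff I _).mpr ⟨_, fun j hj => hc j ?_, rfl⟩
    simp only [Pi.sub_apply] at hj
    omega
  have hbi : b i ∈ AddSubmonoid.closure (b '' I) :=
    AddSubmonoid.subset_closure (Set.mem_image_of_mem b (hc i hi))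
  exact (hτ.2 (b i) _ hbi hrest (by rw [add_comm, ← hsum]; exact hv)).1

end SmoothingAux

/-- A simplicial toric monoid `σ` with extremals
`v₁,…,v_n` (linearly independent elements of `σ` whose non-negative span is
the support of `σ`) admits a canonical smooth refinement, its *smoothing*:
the collection of all submonoids `ℤ≥0⟨v_i : i ∈ I⟩`, `I ⊆ {1,…,n}`, is a
refinement of `σ` all of whose members are smooth. -/
theorem smoothing_isRefinement {n k : ℕ} (σ : AddSubmonoid (L n))
    (hσ : IsToric σ) (b : Fin k → L n)
    (hmem : ∀ i, b i ∈ σ)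
    (hind : LinearIndependent ℤ b)
    (hsupp : supp σ = Submodule.span ℝ≥0 (toReal '' Set.range b)) :
    IsRefinement {τ | ∃ I : Set (Fin k), τ = AddSubmonoid.closure (b '' I)} σ ∧
    ∀ τ ∈ {τ | ∃ I : Set (Fin k), τ = AddSubmonoid.closure (b '' I)}, IsSmooth τ := by
  classical
  obtain ⟨-, -, -⟩ := hσ
  refine ⟨⟨?_, ?_, ?_, ?_⟩, ?_⟩
  · rintro σ' ⟨I, rfl⟩
    refine AddSubmonoid.closure_le.2 ?_
    rintro x ⟨i, -, rfl⟩
    exact hmem i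
  · rintro σ' ⟨I, rfl⟩ τ hτ
    refine ⟨{i | i ∈ I ∧ b i ∈ τ}, le_antisymm ?_ ?_⟩
    · intro v hv
      obtain ⟨c, hc, rfl⟩ := (SmoothingAux.mem_closure_image_iff I v).mp (hτ.1 hv)
      exact (SmoothingAux.mem_closure_image_iff _ _).mpr
        ⟨c, fun i hi => ⟨hc i hi, SmoothingAux.gen_mem_of_mem_face hτ hc hv hi⟩, rfl⟩
    · refine AddSubmonoid.closure_le.2 ?_
      rintro x ⟨i, ⟨-, hiτ⟩, rfl⟩
      exact hiτ
  · rintro σ₁ ⟨I₁, rfl⟩ σ₂ ⟨I₂, rfl⟩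
    rw [SmoothingAux.inter_eq hind]
    exact ⟨SmoothingAux.face_of_subset hind Set.inter_subset_left,
      SmoothingAux.face_of_subset hind Set.inter_subset_right⟩
  · apply Set.Subset.antisymm
    · refine Set.iUnion₂_subset ?_
      rintro σ' ⟨I, rfl⟩
      have hle : AddSubmonoid.closure (b '' I) ≤ σ := by
        refine AddSubmonoid.closure_le.2 ?_
        rintro x ⟨i, -, rfl⟩
        exact hmem i
      exact Submodule.span_mono (Set.image_mono hle)
    · intro x hx
      refine Set.mem_biUnion ⟨Set.univ, rfl⟩ ?_
      have h1 : Set.range b ⊆ (AddSubmonoid.closure (b '' (Set.univ : Set (Fin k))) :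
          Set (L n)) := by
        rintro y ⟨i, rfl⟩
        exact AddSubmonoid.subset_closure ⟨i, trivial, rfl⟩
      have : x ∈ Submodule.span ℝ≥0 (toReal '' Set.range b) := by rw [← hsupp]; exact hx
      exact Submodule.span_mono (Set.image_mono (f := toReal) h1) this
  · rintro τ ⟨I, rfl⟩
    haveI : Fintype I := Set.Finite.fintype I.toFinite
    refine ⟨Fintype.card I, fun j => b ((Fintype.equivFin I).symm j : Fin k), ?_, ?_⟩
    · exact hind.comp _ (Subtype.val_injective.comp (Fintype.equivFin I).symm.injective)
    · congr 1
      have : (fun j => b ((Fintype.equivFin I).symm j : Fin k)) =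
          b ∘ (Subtype.val ∘ (Fintype.equivFin I).symm) := rfl
      rw [this, Set.range_comp, (Fintype.equivFin I).symm.surjective.range_comp,
        Subtype.range_coe]

end Toric
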